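/- Let p be an odd prime, x₁,x₂,y₁,y₂,w,v ∈ Z_p with y₁, y₂, y₁+y₂ all nonzero, and set Δ := (2wy₁ + vy₁ − v² − 2vx₁)(y₁+y₂)y₂ + (vy₂ + x₁y₂ − x₂y₁)². If Δ is a nonzero square in Z_p, say Δ = δ² with δ ≠ 0, then b₁ = (vy₁ + x₂y₁ − x₁y₂ + δ)/(y₁(y₁+y₂)) and b₂ = (vy₂ + x₁y₂ − x₂y₁ − δ)/(y₂(y₁+y₂)) satisfy the system b₁x₁ + s b₁(1−b₁)y₁ + b₂x₂ + s b₂(1−b₂)y₂ = w and b₁y₁ + b₂y₂ = v, where s is the inverse of −2 in Z_p. -/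
import Mathlib


/-- Explicit solution of the matrix sum problem for the Heisenberg group with `k = 2`:
if `y₁, y₂, y₁+y₂ ≠ 0` and the discriminant `Δ = δ²` is a nonzero square, then the
displayed `b₁, b₂` solve the system. -/
theorem stmt_14 {p : ℕ} [Fact p.Prime] (hodd : p ≠ 2)
    (s : ZMod p) (hs : (-2 : ZMod p) * s = 1)
    (x₁ x₂ y₁ y₂ w v : ZMod p)
    (hy₁ : y₁ ≠ 0) (hy₂ : y₂ ≠ 0) (hy₁₂ : y₁ + y₂ ≠ 0)
    (δ : ZMod p) (hδ : δ ≠ 0)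
    (hΔ : δ ^ 2 = (2 * w * y₁ + v * y₁ - v ^ 2 - 2 * v * x₁) * (y₁ + y₂) * y₂
                 + (v * y₂ + x₁ * y₂ - x₂ * y₁) ^ 2) :
    let b₁ := (v * y₁ + x₂ * y₁ - x₁ * y₂ + δ) / (y₁ * (y₁ + y₂))
    let b₂ := (v * y₂ + x₁ * y₂ - x₂ * y₁ - δ) / (y₂ * (y₁ + y₂))
    b₁ * x₁ + s * b₁ * (1 - b₁) * y₁ + b₂ * x₂ + s * b₂ * (1 - b₂) * y₂ = w
    ∧ b₁ * y₁ + b₂ * y₂ = v := by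
  intro b₁ b₂
  have h2 : (2 : ZMod p) ≠ 0 := fun h => one_ne_zero (by linear_combination -hs - s * h)
  have h2s : (2 : ZMod p) * s = -1 := by linear_combination -hs
  have hD : y₁ * (y₁ + y₂) ≠ 0 := mul_ne_zero hy₁ hy₁₂
  have hE : y₂ * (y₁ + y₂) ≠ 0 := mul_ne_zero hy₂ hy₁₂
  have e₁ : b₁ * (y₁ * (y₁ + y₂)) = v * y₁ + x₂ * y₁ - x₁ * y₂ + δ :=
    div_mul_cancel₀ _ hD
  have e₂ : b₂ * (y₂ * (y₁ + y₂)) = v * y₂ + x₁ * y₂ - x₂ * y₁ - δ :=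
    div_mul_cancel₀ _ hE
  clear_value b₁ b₂
  have hM : (2 : ZMod p) * (y₁ * y₂ * (y₁ + y₂) ^ 2) ≠ 0 :=
    mul_ne_zero h2 (mul_ne_zero (mul_ne_zero hy₁ hy₂) (pow_ne_zero 2 hy₁₂))
  constructor
  · apply mul_left_cancel₀ hM
    linear_combination
        (y₁ * y₂ * (y₁ + y₂) * (b₁ * (y₁ * (y₁ + y₂))) - y₂ * (b₁ * (y₁ * (y₁ + y₂))) ^ 2
          + y₁ * y₂ * (y₁ + y₂) * (b₂ * (y₂ * (y₁ + y₂))) - y₁ * (b₂ * (y₂ * (y₁ + y₂))) ^ 2) * h2s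
      + (2 * x₁ * y₂ * (y₁ + y₂) - y₁ * y₂ * (y₁ + y₂)
          + y₂ * (b₁ * (y₁ * (y₁ + y₂)) + (v * y₁ + x₂ * y₁ - x₁ * y₂ + δ))) * e₁
      + (2 * x₂ * y₁ * (y₁ + y₂) - y₁ * y₂ * (y₁ + y₂)
          + y₁ * (b₂ * (y₂ * (y₁ + y₂)) + (v * y₂ + x₁ * y₂ - x₂ * y₁ - δ))) * e₂
      + (y₁ + y₂) * hΔ
  · apply mul_left_cancel₀ hy₁₂
    linear_combination e₁ + e₂
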